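/- If a TAPF instance has no solution, then CBM terminates and reports failure: since only finitely many nodes can be generated and every popped node must have colliding paths (else a solution would exist), the priority queue eventually becomes empty. -/

import Mathlib

open scoped Classical

/-- If a TAPF instance has no solution, CBM terminates and reports failure:
since only finitely many nodes can be generated (the node universe is finite
and generated nodes are always new) and every popped node is non-terminal
(else a solution would exist), the priority queue eventually becomes empty. -/
theorem stmt14 {Node : Type*} [Fintype Node]
    (Terminal : Node → Prop)
    (Q : ℕ → Finset Node) (pop : ℕ → Node) (children : ℕ → Finset Node)
    (root : Node)
    (hQ0 : Q 0 = {root})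
    (hpop : ∀ n, (Q n).Nonempty → pop n ∈ Q n)
    (hstep : ∀ n, (Q n).Nonempty → ¬ Terminal (pop n) →
      Q (n + 1) = (Q n).erase (pop n) ∪ children n)
    (hempty : ∀ n, Q n = ∅ → Q (n + 1) = ∅)
    (hnew : ∀ n N, N ∈ children n → ∀ m ≤ n, N ∉ Q m)
    (hnosol : ∀ N : Node, ¬ Terminal N) :
    ∃ n, Q n = ∅ := by
  by_contra h
  push_neg at h
  have hne : ∀ n, (Q n).Nonempty := fun n => h n
  -- a popped node never reappears
  have key : ∀ m k, pop m ∉ Q (m + 1 + k) := by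
    intro m k
    induction k with
    | zero =>
      rw [hstep m (hne m) (hnosol _)]
      simp only [Finset.mem_union, Finset.mem_erase, not_or]
      exact ⟨fun hc => hc.1 rfl, fun hc => hnew m _ hc m le_rfl (hpop m (hne m))⟩
    | succ k ih =>
      have : m + 1 + (k + 1) = (m + 1 + k) + 1 := by ring
      rw [this, hstep _ (hne _) (hnosol _)]
      simp only [Finset.mem_union, Finset.mem_erase, not_or]
      exact ⟨fun hc => ih hc.2,
        fun hc => hnew _ _ hc m (by omega) (hpop m (hne m))⟩
  have hinj : Function.Injective pop := by
    intro a b hab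
    by_contra hne'
    rcases Nat.lt_or_ge a b with hlt | hge
    · obtain ⟨k, rfl⟩ : ∃ k, b = a + 1 + k := ⟨b - (a+1), by omega⟩
      exact key a k (hab ▸ hpop _ (hne _))
    · have hlt : b < a := lt_of_le_of_ne hge (Ne.symm hne')
      obtain ⟨k, rfl⟩ : ∃ k, a = b + 1 + k := ⟨a - (b+1), by omega⟩
      exact key b k (hab ▸ hpop _ (hne _))
  obtain ⟨x, y, hxy, he⟩ := Finite.exists_ne_map_eq_of_infinite pop
  exact hxy (hinj he)
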